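/- Let π : C ⥤ D be a functor with a fully faithful left adjoint l : D ⥤ C (with counit ε and unit η). Assume C has pushouts and π preserves pushouts. Fix c in C and f : π.obj c ⟶ d' in D; let c' be the pushout in C of ε_c : l(π.obj c) ⟶ c along l.map f, with structure maps φ : c ⟶ c' and j : l d' ⟶ c', and let θ : d' ⟶ π.obj c' be the composite η_{d'} ≫ π.map j. Then for every object c'' of C, the map sending ψ : c' ⟶ c'' to the pair (ψ ∘ φ, π.map ψ ∘ θ) is a bijection from Hom_C(c', c'') onto the set of pairs (g : c ⟶ c'', h : d' ⟶ π.obj c'') such that h ∘ f = π.map g; i.e. the square of hom-sets Hom_C(c',c'') → Hom_C(c,c'') over Hom_D(π c', π c'') ≅ Hom_D(d', π c'') → Hom_D(π c, π c'') is a pullback of sets. -/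

import Mathlib

open CategoryTheory Limits

/-- Let `π : C ⥤ D` have a fully faithful left adjoint `l`, let `C` have pushouts and let `π`
preserve pushouts. For `f : π.obj c ⟶ d'`, let `c'` be the pushout of the counit
`ε_c : l (π.obj c) ⟶ c` along `l.map f`, with structure maps `φ = pushout.inl : c ⟶ c'` and
`j = pushout.inr : l d' ⟶ c'`, and let `θ = η_{d'} ≫ π.map j : d' ⟶ π.obj c'`. Then for every
`c''`, the assignment `ψ ↦ (φ ≫ ψ, θ ≫ π.map ψ)` is a bijection from `Hom_C(c', c'')` onto
the set of pairs `(g : c ⟶ c'', h : d' ⟶ π.obj c'')` with `f ≫ h = π.map g`; i.e. the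
hom-set square is a pullback of sets. -/
theorem pushout_cocartesian_hom_pullback
    {C : Type*} {D : Type*} [Category C] [Category D]
    (π : C ⥤ D) (l : D ⥤ C) (adj : l ⊣ π) [l.Full] [l.Faithful]
    [HasPushouts C] [PreservesColimitsOfShape WalkingSpan π]
    (c : C) {d' : D} (f : π.obj c ⟶ d') :
    (∀ (c'' : C) (ψ : pushout (adj.counit.app c) (l.map f) ⟶ c''),
      f ≫ (adj.unit.app d' ≫ π.map (pushout.inr (adj.counit.app c) (l.map f))) ≫ π.map ψ =
        π.map (pushout.inl (adj.counit.app c) (l.map f) ≫ ψ)) ∧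
    (∀ (c'' : C) (g : c ⟶ c'') (h : d' ⟶ π.obj c''), f ≫ h = π.map g →
      ∃! ψ : pushout (adj.counit.app c) (l.map f) ⟶ c'',
        pushout.inl (adj.counit.app c) (l.map f) ≫ ψ = g ∧
        (adj.unit.app d' ≫ π.map (pushout.inr (adj.counit.app c) (l.map f))) ≫ π.map ψ = h) := by
  constructor
  · intro c'' ψ
    have hη := adj.unit.naturality f
    dsimp at hη
    rw [Functor.map_comp]
    slice_lhs 1 2 => rw [hη]
    slice_lhs 2 3 => rw [← π.map_comp, ← pushout.condition, π.map_comp]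
    slice_lhs 1 2 => rw [adj.right_triangle_components]
    simp
  · intro c'' g h hc
    have comm : adj.counit.app c ≫ g = l.map f ≫ l.map h ≫ adj.counit.app c'' := by
      rw [← l.map_comp_assoc, hc]
      exact (adj.counit_naturality g).symm
    refine ⟨pushout.desc g (l.map h ≫ adj.counit.app c'') comm, ⟨pushout.inl_desc _ _ _, ?_⟩, ?_⟩
    · rw [Category.assoc, ← π.map_comp, pushout.inr_desc, π.map_comp]
      have hη := adj.unit.naturality h
      dsimp at hη
      slice_lhs 1 2 => rw [← hη]
      simp
    · rintro ψ ⟨h1, h2⟩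
      apply pushout.hom_ext
      · rw [h1]; exact (pushout.inl_desc _ _ _).symm
      · rw [pushout.inr_desc]
        have : l.map h ≫ adj.counit.app c'' =
            pushout.inr (adj.counit.app c) (l.map f) ≫ ψ := by
          rw [← h2]
          simp only [Functor.map_comp, Category.assoc]
          slice_lhs 3 4 => erw [adj.counit_naturality]
          slice_lhs 2 3 => erw [adj.counit_naturality]
          slice_lhs 1 2 => rw [adj.left_triangle_components]
          simp
        rw [this]
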